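/- Let φ: ℝ → ℝ be three times differentiable with φ'' ≥ 0 and |φ'''(t)| ≤ M·φ''(t) for all t and some M ≥ 0 (one-dimensional quasi self-concordance). Then φ(1) ≤ φ(0) + φ'(0) + φ''(0)·(e^M - M - 1)/M². -/

import Mathlib

private lemma le_zero_of_nonpos_deriv {f f' : ℝ → ℝ} (hd : ∀ t, HasDerivAt f (f' t) t)
    (h : ∀ t ∈ Set.Icc (0:ℝ) 1, f' t ≤ 0) : ∀ t ∈ Set.Icc (0:ℝ) 1, f t ≤ f 0 := by
  have hdiff : Differentiable ℝ f := fun t => (hd t).differentiableAt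
  have hA : AntitoneOn f (Set.Icc 0 1) := by
    apply antitoneOn_of_deriv_nonpos (convex_Icc 0 1) hdiff.continuous.continuousOn
      hdiff.differentiableOn
    intro x hx
    rw [interior_Icc] at hx
    rw [(hd x).deriv]
    exact h x ⟨hx.1.le, hx.2.le⟩
  intro t ht
  exact hA (Set.left_mem_Icc.2 (by norm_num)) ht ht.1

/-- One-dimensional quasi-self-concordant upper bound (Bach, Prop. 1 on a line):
if `φ'' ≥ 0` and `|φ'''| ≤ M φ''`, then
`φ(1) ≤ φ(0) + φ'(0) + φ''(0)·(e^M - M - 1)/M²`, the factor being `1/2` for `M = 0`. -/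
theorem stmt11 (φ φ' φ'' φ''' : ℝ → ℝ) (M : ℝ) (hM : 0 ≤ M)
    (hd1 : ∀ t, HasDerivAt φ (φ' t) t)
    (hd2 : ∀ t, HasDerivAt φ' (φ'' t) t)
    (hd3 : ∀ t, HasDerivAt φ'' (φ''' t) t)
    (hconv : ∀ t, 0 ≤ φ'' t)
    (hqsc : ∀ t, |φ''' t| ≤ M * φ'' t) :
    φ 1 ≤ φ 0 + φ' 0 + φ'' 0 *
      (if M = 0 then 1 / 2 else (Real.exp M - M - 1) / M ^ 2) := by
  by_cases hM0 : M = 0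
  · -- M = 0 : φ''' = 0, everything is exact Taylor
    subst hM0
    rw [if_pos rfl]
    have h3 : ∀ t, φ''' t = 0 := by
      intro t
      have := hqsc t
      simp only [zero_mul] at this
      exact abs_eq_zero.mp (le_antisymm this (abs_nonneg _))
    have hc2 : ∀ t, φ'' t = φ'' 0 := by
      intro t
      have hdiff : Differentiable ℝ φ'' := fun t => (hd3 t).differentiableAt
      exact is_const_of_deriv_eq_zero hdiff (fun x => by rw [(hd3 x).deriv, h3]) t 0
    have hc1 : ∀ t, φ' t = φ' 0 + φ'' 0 * t := by
      intro t
      have hd : ∀ x, HasDerivAt (fun x => φ' x - φ'' 0 * x) 0 x := by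
        intro x
        have := (hd2 x).sub ((hasDerivAt_id x).const_mul (φ'' 0))
        rw [hc2 x, mul_one, sub_self] at this
        exact this
      have hdiff : Differentiable ℝ (fun x => φ' x - φ'' 0 * x) :=
        fun x => (hd x).differentiableAt
      have := is_const_of_deriv_eq_zero hdiff (fun x => (hd x).deriv) t 0
      simp only [mul_zero, sub_zero] at this
      linarith [this]
    have hc0 : φ 1 = φ 0 + φ' 0 + φ'' 0 / 2 := by
      have hd : ∀ x, HasDerivAt (fun x => φ x - φ' 0 * x - φ'' 0 * x ^ 2 / 2) 0 x := by
        intro x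
        have h1 := (hd1 x).sub ((hasDerivAt_id x).const_mul (φ' 0))
        have h2 : HasDerivAt (fun x : ℝ => φ'' 0 * x ^ 2 / 2) (φ'' 0 * x) x := by
          have := ((hasDerivAt_pow 2 x).const_mul (φ'' 0)).div_const 2
          exact this.congr_deriv (by ring)
        have := h1.sub h2
        exact this.congr_deriv (by rw [hc1 x]; ring)
      have hdiff : Differentiable ℝ (fun x => φ x - φ' 0 * x - φ'' 0 * x ^ 2 / 2) :=
        fun x => (hd x).differentiableAt
      have := is_const_of_deriv_eq_zero hdiff (fun x => (hd x).deriv) 1 0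
      simp only [mul_one, one_pow, mul_zero, sub_zero] at this
      linarith [this]
    rw [hc0]; linarith
  · rw [if_neg hM0]
    have hMpos : 0 < M := lt_of_le_of_ne hM (Ne.symm hM0)
    -- Step A : φ'' t ≤ φ'' 0 * exp (M t) on [0,1]
    have stepA : ∀ t ∈ Set.Icc (0:ℝ) 1, φ'' t ≤ φ'' 0 * Real.exp (M * t) := by
      have hdh : ∀ t, HasDerivAt (fun x => φ'' x * Real.exp (-(M * x)))
          (φ''' t * Real.exp (-(M * t)) + φ'' t * (Real.exp (-(M * t)) * (-M))) t := by
        intro t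
        have h0 : HasDerivAt (fun x : ℝ => -(M * x)) (-M) t := by
          exact (((hasDerivAt_id t).const_mul M).neg).congr_deriv (by ring)
        exact (hd3 t).mul h0.exp
      have key := le_zero_of_nonpos_deriv hdh (by
        intro t _
        have h1 := hqsc t
        have h2 : φ''' t ≤ M * φ'' t := (le_abs_self _).trans h1
        have h3 := Real.exp_pos (-(M * t))
        nlinarith)
      intro t ht
      have := key t ht
      simp only [mul_zero, neg_zero, Real.exp_zero, mul_one] at this
      have hpos := Real.exp_pos (M * t)
      have hinv : Real.exp (-(M * t)) = (Real.exp (M * t))⁻¹ := Real.exp_neg _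
      rw [hinv, ← div_eq_mul_inv, div_le_iff₀ hpos] at this
      linarith
    -- Step B : φ' t ≤ φ' 0 + φ'' 0 * (exp (M t) - 1) / M on [0,1]
    have stepB : ∀ t ∈ Set.Icc (0:ℝ) 1,
        φ' t ≤ φ' 0 + φ'' 0 * (Real.exp (M * t) - 1) / M := by
      have hdu : ∀ t, HasDerivAt (fun x => φ' x - φ'' 0 * Real.exp (M * x) / M)
          (φ'' t - φ'' 0 * (Real.exp (M * t) * M) / M) t := by
        intro t
        have h0 : HasDerivAt (fun x : ℝ => M * x) M t := by
          simpa using (hasDerivAt_id t).const_mul M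
        exact (hd2 t).sub ((h0.exp.const_mul (φ'' 0)).div_const M)
      have key := le_zero_of_nonpos_deriv hdu (by
        intro t ht
        have h1 := stepA t ht
        have h2 : φ'' 0 * (Real.exp (M * t) * M) / M = φ'' 0 * Real.exp (M * t) := by
          field_simp
        rw [h2]
        linarith)
      intro t ht
      have := key t ht
      simp only [mul_zero, Real.exp_zero, mul_one] at this
      have h2 : φ'' 0 * (Real.exp (M * t) - 1) / M
          = φ'' 0 * Real.exp (M * t) / M - φ'' 0 / M := by ring
      linarith [this, h2.ge]
    -- Step C : integrate once more
    have hdv : ∀ t, HasDerivAt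
        (fun x => φ x - φ' 0 * x - φ'' 0 * Real.exp (M * x) / M ^ 2 + φ'' 0 * x / M)
        (φ' t - φ' 0 - φ'' 0 * (Real.exp (M * t) * M) / M ^ 2 + φ'' 0 / M) t := by
      intro t
      have h0 : HasDerivAt (fun x : ℝ => M * x) M t := by
        simpa using (hasDerivAt_id t).const_mul M
      have h1 := ((hd1 t).sub ((hasDerivAt_id t).const_mul (φ' 0))).sub
        ((h0.exp.const_mul (φ'' 0)).div_const (M ^ 2))
      have h2 := h1.add (((hasDerivAt_id t).const_mul (φ'' 0)).div_const M)
      exact h2.congr_deriv (by ring)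
    have key := le_zero_of_nonpos_deriv hdv (by
      intro t ht
      have h1 := stepB t ht
      have h2 : φ'' 0 * (Real.exp (M * t) * M) / M ^ 2
          = φ'' 0 * (Real.exp (M * t) - 1) / M + φ'' 0 / M := by
        field_simp
        ring
      linarith)
    have hfin := key 1 (by norm_num)
    simp only [mul_one, mul_zero, Real.exp_zero, sub_zero, add_zero, zero_div] at hfin
    have hexp : φ'' 0 * ((Real.exp M - M - 1) / M ^ 2)
        = φ'' 0 * Real.exp M / M ^ 2 - φ'' 0 / M - φ'' 0 / M ^ 2 := by
      field_simp
    linarith
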